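/- Let G = ⟨H, t | t a t⁻¹ = φ(a) for a ∈ A⟩ be an HNN extension with [H : A] ≥ 2 and [H : B] ≥ 2, let η : Σ → G be a finite symmetric generating set, and let d denote the word metric on the right coset space H\G of the canonical image of H (where d(Hg, Hg') is the least length of a word w over Σ with Hg·(element represented by w) = Hg'). Then there exist a map f : H\G → H\G and a constant k ∈ ℕ such that d(f(x), x) ≤ k for every coset x, and every fiber f⁻¹(x) contains at least 2 elements; that is, the Schreier graph of G with respect to H satisfies the Gromov condition. -/

import Mathlib

universe u

open Monoid

/-- The number of words of length `n` over `α` lying in `L`. -/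
noncomputable def wordCount {α : Type*} (L : Set (List α)) (n : ℕ) : ℕ :=
  Nat.card {w : List α // w ∈ L ∧ w.length = n}

/-- A set of words over a finite alphabet is strongly negligible: the number of its words of
length `n` is at most `C·ρⁿ·|Σ|ⁿ` for some constants `C > 0` and `0 < ρ < 1`. -/
def StronglyNegligible {α : Type*} [Fintype α] (L : Set (List α)) : Prop :=
  ∃ C ρ : ℝ, 0 < C ∧ 0 < ρ ∧ ρ < 1 ∧ ∀ n : ℕ,
    (wordCount L n : ℝ) ≤ C * ρ ^ n * (Fintype.card α : ℝ) ^ n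

/-- A set of words is strongly generic if its complement is strongly negligible. -/
def StronglyGeneric {α : Type*} [Fintype α] (L : Set (List α)) : Prop :=
  StronglyNegligible Lᶜ

/-- `η : α → G` together with the involution `inv` is a symmetric generating set:
`inv` is a fixed-point-free involution, `η (inv a) = (η a)⁻¹`, and the image of `η`
generates `G` as a group. -/
def IsSymmetricGen {α G : Type*} [Group G] (η : α → G) (inv : α → α) : Prop :=
  (∀ a, inv (inv a) = a) ∧ (∀ a, inv a ≠ a) ∧ (∀ a, η (inv a) = (η a)⁻¹) ∧
    Subgroup.closure (Set.range η) = ⊤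

/-- The element of `G` represented by a word over `α`. -/
def evalWord {α G : Type*} [Monoid G] (η : α → G) (w : List α) : G :=
  (w.map η).prod

/-- The word metric on the right coset space `P\G`: the least length of a word `w` over
`α` such that `Pg·(evalWord η w) = Pg'`. -/
noncomputable def cosetDist {G : Type*} [Group G] (P : Subgroup G) {α : Type*}
    (η : α → G) (x y : Quotient (QuotientGroup.rightRel P)) : ℕ :=
  sInf {n : ℕ | ∃ w : List α, w.length = n ∧ ∃ g : G,
    x = Quotient.mk (QuotientGroup.rightRel P) g ∧
    y = Quotient.mk (QuotientGroup.rightRel P) (g * evalWord η w)}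

namespace Stmt17Aux

open HNNExtension Subgroup

lemma exists_evalWord {α G : Type*} [Group G] {η : α → G} {inv : α → α}
    (hsym : IsSymmetricGen η inv) (g : G) : ∃ w : List α, evalWord η w = g := by
  classical
  let K : Subgroup G :=
    { carrier := {g | ∃ w : List α, evalWord η w = g}
      one_mem' := ⟨[], by simp [evalWord]⟩
      mul_mem' := by
        rintro x y ⟨w₁, rfl⟩ ⟨w₂, rfl⟩
        exact ⟨w₁ ++ w₂, by simp [evalWord]⟩
      inv_mem' := by
        rintro x ⟨w, rfl⟩
        refine ⟨(w.map inv).reverse, ?_⟩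
        induction w with
        | nil => simp [evalWord]
        | cons a w ih =>
          have h1 : evalWord η (((a :: w).map inv).reverse)
              = evalWord η ((w.map inv).reverse) * η (inv a) := by
            simp [evalWord]
          have h2 : evalWord η (a :: w) = η a * evalWord η w := by simp [evalWord]
          rw [h1, ih, hsym.2.2.1, h2, mul_inv_rev] }
  have hle : Subgroup.closure (Set.range η) ≤ K := by
    rw [Subgroup.closure_le]
    rintro x ⟨a, rfl⟩
    exact ⟨[a], by simp [evalWord]⟩
  rw [hsym.2.2.2] at hle
  exact hle trivial

variable {H : Type*} [Group H] {A B : Subgroup H} {φ : A ≃* B}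
  {d : NormalWord.TransversalPair H A B}

/-- Append two syllables to a normal word, with hypotheses ensuring no normalization
is needed. -/
def append2 (w : NormalWord d) (p q : ℤˣ × H)
    (hp : p.2 ∈ d.set p.1) (hq : q.2 ∈ d.set q.1)
    (hlink : ∀ x ∈ w.toList.getLast?, x.2 ∈ toSubgroup A B x.1 → x.1 = p.1)
    (hpq : p.2 ∈ toSubgroup A B p.1 → p.1 = q.1) : NormalWord d where
  head := w.head
  toList := w.toList ++ [p, q]
  mem_set := by
    intro u g hmem
    rcases List.mem_append.1 hmem with h | h
    · exact w.mem_set u g h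
    · rcases List.mem_cons.1 h with h | h
      · rw [← h] at hp; exact hp
      · rcases List.mem_singleton.1 h with h
        rw [← h] at hq; exact hq
  chain := by
    rw [List.isChain_append]
    refine ⟨w.chain, ?_, ?_⟩
    · exact List.isChain_pair.2 hpq
    · intro x hx y hy
      obtain rfl : p = y := by simpa using hy
      exact hlink x hx

lemma append2_head (w : NormalWord d) (p q : ℤˣ × H) (hp hq hlink hpq) :
    (append2 w p q hp hq hlink hpq).head = w.head := rfl

lemma append2_toList (w : NormalWord d) (p q : ℤˣ × H) (hp hq hlink hpq) :
    (append2 w p q hp hq hlink hpq).toList = w.toList ++ [p, q] := rfl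

lemma append2_prod (w : NormalWord d) (p q : ℤˣ × H) (hp hq hlink hpq) :
    (append2 w p q hp hq hlink hpq).prod φ
      = w.prod φ * (t ^ (p.1 : ℤ) * of p.2 * (t ^ (q.1 : ℤ) * of q.2)) := by
  simp [append2, NormalWord.ReducedWord.prod, mul_assoc]

/-- The normal word with head `1` attached to a right coset of `of.range`. -/
noncomputable def nw (d : NormalWord.TransversalPair H A B)
    (c : Quotient (QuotientGroup.rightRel
      (HNNExtension.of : H →* HNNExtension H A B φ).range)) :
    NormalWord d :=
  Quotient.liftOn c
    (fun x => ⟨⟨1, (x • (NormalWord.empty : NormalWord d)).toList,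
        (x • (NormalWord.empty : NormalWord d)).chain⟩,
      (x • (NormalWord.empty : NormalWord d)).mem_set⟩)
    (by
      intro x y hxy
      have hxy' : y * x⁻¹ ∈ (HNNExtension.of : H →* HNNExtension H A B φ).range :=
        QuotientGroup.rightRel_apply.1 hxy
      obtain ⟨h, hh⟩ := hxy'
      have hy : y = HNNExtension.of h * x := by
        rw [hh]; group
      apply NormalWord.ext
      · rfl
      · show (x • (NormalWord.empty : NormalWord d)).toList
          = (y • (NormalWord.empty : NormalWord d)).toList
        rw [hy, mul_smul, NormalWord.of_smul_eq_smul, NormalWord.group_smul_toList])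

lemma nw_head (d : NormalWord.TransversalPair H A B)
    (c : Quotient (QuotientGroup.rightRel
      (HNNExtension.of : H →* HNNExtension H A B φ).range)) :
    (nw d c).head = 1 := by
  induction c using Quotient.inductionOn with
  | h x => rfl

lemma mk_nw_prod (d : NormalWord.TransversalPair H A B)
    (c : Quotient (QuotientGroup.rightRel
      (HNNExtension.of : H →* HNNExtension H A B φ).range)) :
    Quotient.mk (QuotientGroup.rightRel
      (HNNExtension.of : H →* HNNExtension H A B φ).range) ((nw d c).prod φ) = c := by
  induction c using Quotient.inductionOn with
  | h x =>
    apply Quotient.sound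
    have h1 : ((x • (NormalWord.empty : NormalWord d)).prod φ) = x := by
      rw [NormalWord.prod_smul, NormalWord.prod_empty, mul_one]
    have h2 : x • (NormalWord.empty : NormalWord d)
        = ((x • (NormalWord.empty : NormalWord d)).head) •
          (nw d (Quotient.mk (QuotientGroup.rightRel
            (HNNExtension.of : H →* HNNExtension H A B φ).range) x)) := by
      apply NormalWord.ext
      · rw [NormalWord.group_smul_head]
        exact (mul_one _).symm
      · exact (NormalWord.group_smul_toList ((x • (NormalWord.empty : NormalWord d)).head)
          (nw d (Quotient.mk (QuotientGroup.rightRel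
            (HNNExtension.of : H →* HNNExtension H A B φ).range) x))).symm
    have h3 : x = HNNExtension.of ((x • (NormalWord.empty : NormalWord d)).head) *
        ((nw d (Quotient.mk (QuotientGroup.rightRel
          (HNNExtension.of : H →* HNNExtension H A B φ).range) x)).prod φ) := by
      conv_lhs => rw [← h1, h2]
      rw [NormalWord.prod_group_smul]
    refine QuotientGroup.rightRel_apply.2 ⟨(x • (NormalWord.empty : NormalWord d)).head, ?_⟩
    exact (mul_inv_eq_iff_eq_mul.2 h3).symm

lemma nw_mk_prod (d : NormalWord.TransversalPair H A B)
    (w : NormalWord d) (hw : w.head = 1) :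
    nw d (Quotient.mk (QuotientGroup.rightRel
      (HNNExtension.of : H →* HNNExtension H A B φ).range) (w.prod φ)) = w := by
  have h := NormalWord.prod_smul_empty φ w
  apply NormalWord.ext
  · show (1 : H) = w.head
    exact hw.symm
  · show ((w.prod φ) • (NormalWord.empty : NormalWord d)).toList = w.toList
    rw [h]

open Classical in
/-- Append a pair of syllables `t^{±1} r · t g` to a normal word, never cancelling. -/
noncomputable def appendW (w : NormalWord d) (rB g : H)
    (hrB : rB ∈ d.set (-1)) (hrBB : rB ∉ toSubgroup A B (-1))
    (h1A : (1 : H) ∈ d.set 1) (hg : g ∈ d.set 1) : NormalWord d :=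
  if hb : ∃ x ∈ w.toList.getLast?, x.1 = (-1 : ℤˣ) ∧ x.2 ∈ toSubgroup A B (-1) then
    append2 w ((-1 : ℤˣ), rB) ((1 : ℤˣ), g) hrB hg
      (by
        obtain ⟨x₀, hx₀, h₀, -⟩ := hb
        intro x hx _
        rw [Option.mem_def] at hx hx₀
        rw [hx₀] at hx
        obtain rfl : x₀ = x := Option.some_inj.1 hx
        exact h₀)
      (fun hmem => absurd hmem hrBB)
  else
    append2 w ((1 : ℤˣ), (1 : H)) ((1 : ℤˣ), g) h1A hg
      (by
        push_neg at hb
        intro x hx hmem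
        rcases Int.units_eq_one_or x.1 with h | h
        · exact h
        · exact absurd (h ▸ hmem) (hb x hx h))
      (fun _ => rfl)

lemma appendW_spec (w : NormalWord d) (rB g : H)
    (hrB : rB ∈ d.set (-1)) (hrBB : rB ∉ toSubgroup A B (-1))
    (h1A : (1 : H) ∈ d.set 1) (hg : g ∈ d.set 1) :
    ∃ pr : ℤˣ × H, (pr = ((-1 : ℤˣ), rB) ∨ pr = ((1 : ℤˣ), (1 : H))) ∧
      (appendW w rB g hrB hrBB h1A hg).head = w.head ∧
      (appendW w rB g hrB hrBB h1A hg).toList = w.toList ++ [pr, ((1 : ℤˣ), g)] ∧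
      (appendW w rB g hrB hrBB h1A hg).prod φ
        = w.prod φ * (t ^ ((pr.1 : ℤ)) * of pr.2 * (t ^ (((1 : ℤˣ)) : ℤ) * of g)) := by
  unfold appendW
  split
  · exact ⟨((-1 : ℤˣ), rB), Or.inl rfl, rfl, rfl, by rw [append2_prod]⟩
  · exact ⟨((1 : ℤˣ), (1 : H)), Or.inr rfl, rfl, rfl, by rw [append2_prod]⟩

end Stmt17Aux

/-- For an HNN extension `G = ⟨H, t | t a t⁻¹ = φ(a), a ∈ A⟩` with
`[H:A] ≥ 2`, `[H:B] ≥ 2` and a finite symmetric generating set `η : Σ → G`, the Schreier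
graph of `G` with respect to the canonical image of `H` satisfies the Gromov condition. -/
theorem stmt_17 {H : Type*} [Group H] (A B : Subgroup H) (φ : A ≃* B)
    (hA : 2 ≤ Cardinal.mk (H ⧸ A)) (hB : 2 ≤ Cardinal.mk (H ⧸ B))
    {α : Type*} [Fintype α] (η : α → HNNExtension H A B φ) (inv : α → α)
    (hsym : IsSymmetricGen η inv) :
    ∃ (f : Quotient (QuotientGroup.rightRel
          (HNNExtension.of : H →* HNNExtension H A B φ).range) →
        Quotient (QuotientGroup.rightRel
          (HNNExtension.of : H →* HNNExtension H A B φ).range))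
      (k : ℕ),
      (∀ x, cosetDist (HNNExtension.of : H →* HNNExtension H A B φ).range η (f x) x ≤ k) ∧
      (∀ x, ∃ y z, y ≠ z ∧ f y = x ∧ f z = x) := by
  classical
  haveI : Nonempty (Quotient (QuotientGroup.rightRel
      (HNNExtension.of : H →* HNNExtension H A B φ).range)) :=
    ⟨Quotient.mk (QuotientGroup.rightRel
      (HNNExtension.of : H →* HNNExtension H A B φ).range) 1⟩
  obtain ⟨Sets, hSets, h1Sets⟩ :
      ∃ S : ℤˣ → Set H, (∀ u, Subgroup.IsComplement
          ((HNNExtension.toSubgroup A B u : Subgroup H) : Set H) (S u)) ∧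
        ∀ u, (1 : H) ∈ S u := by
    have hex := fun u : ℤˣ => (HNNExtension.toSubgroup A B u).exists_isComplement_right 1
    choose S h1 h2 using hex
    exact ⟨S, h1, h2⟩
  set d : HNNExtension.NormalWord.TransversalPair H A B := ⟨Sets, hSets⟩ with hd
  -- transversals have a non-identity element
  have exists_ne : ∀ u : ℤˣ,
      2 ≤ Cardinal.mk (H ⧸ (HNNExtension.toSubgroup A B u : Subgroup H)) →
      ∃ r ∈ Sets u, r ≠ (1 : H) := by
    intro u hcard
    by_contra hcon
    push_neg at hcon
    have htop : (HNNExtension.toSubgroup A B u : Subgroup H) = ⊤ := by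
      rw [Subgroup.eq_top_iff']
      intro g
      obtain ⟨⟨a, s⟩, hprod⟩ := (hSets u).2 g
      have hs1 : (s : H) = 1 := hcon s s.2
      have hag : (a : H) = g := by rw [← hprod]; simp [hs1]
      rw [← hag]; exact a.2
    rw [htop] at hcard
    have hsub : Subsingleton (H ⧸ (⊤ : Subgroup H)) := QuotientGroup.subsingleton_quotient_top
    have hle : Cardinal.mk (H ⧸ (⊤ : Subgroup H)) ≤ 1 := Cardinal.le_one_iff_subsingleton.2 hsub
    have h2 : (2 : Cardinal) ≤ 1 := hcard.trans hle
    norm_num at h2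
  obtain ⟨rA, hrA, hrA1⟩ := exists_ne 1 (by rw [HNNExtension.toSubgroup_one]; exact hA)
  obtain ⟨rB, hrB, hrB1⟩ := exists_ne (-1) (by rw [HNNExtension.toSubgroup_neg_one]; exact hB)
  have not_mem : ∀ (u : ℤˣ) (r : H), r ∈ Sets u → r ≠ 1 →
      r ∉ (HNNExtension.toSubgroup A B u : Subgroup H) := by
    intro u r hr hne hmem
    have heq := (hSets u).1
      (a₁ := ⟨⟨r, hmem⟩, ⟨1, h1Sets u⟩⟩)
      (a₂ := ⟨⟨1, (HNNExtension.toSubgroup A B u).one_mem⟩, ⟨r, hr⟩⟩) (by simp)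
    have h1r : (1 : H) = r := congrArg (fun x => (x.2 : H)) heq
    exact hne h1r.symm
  have hrBB : rB ∉ HNNExtension.toSubgroup A B (-1) := not_mem _ _ hrB hrB1
  -- the two "child" maps
  let pm : (g : H) → g ∈ Sets 1 →
      Quotient (QuotientGroup.rightRel
        (HNNExtension.of : H →* HNNExtension H A B φ).range) →
      Quotient (QuotientGroup.rightRel
        (HNNExtension.of : H →* HNNExtension H A B φ).range) := fun g hg c =>
    Quotient.mk (QuotientGroup.rightRel (HNNExtension.of : H →* HNNExtension H A B φ).range)
      ((Stmt17Aux.appendW (Stmt17Aux.nw d c) rB g hrB hrBB (h1Sets 1) hg).prod φ)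
  have hnwW : ∀ (g : H) (hg : g ∈ Sets 1) c,
      Stmt17Aux.nw d (pm g hg c)
        = Stmt17Aux.appendW (Stmt17Aux.nw d c) rB g hrB hrBB (h1Sets 1) hg := by
    intro g hg c
    apply Stmt17Aux.nw_mk_prod
    obtain ⟨pr, hpr, hh, hL, hprod⟩ :=
      Stmt17Aux.appendW_spec (φ := φ) (Stmt17Aux.nw d c) rB g hrB hrBB (h1Sets 1) hg
    rw [hh, Stmt17Aux.nw_head]
  -- toList description
  have htl : ∀ (g : H) (hg : g ∈ Sets 1) c,
      ∃ pr : ℤˣ × H, (pr = ((-1 : ℤˣ), rB) ∨ pr = ((1 : ℤˣ), (1 : H))) ∧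
        (Stmt17Aux.nw d (pm g hg c)).toList
          = (Stmt17Aux.nw d c).toList ++ [pr, ((1 : ℤˣ), g)] := by
    intro g hg c
    obtain ⟨pr, hpr, hh, hL, hprod⟩ :=
      Stmt17Aux.appendW_spec (φ := φ) (Stmt17Aux.nw d c) rB g hrB hrBB (h1Sets 1) hg
    exact ⟨pr, hpr, by rw [hnwW g hg c, hL]⟩
  -- injectivity
  have hinj : ∀ (g : H) (hg : g ∈ Sets 1), Function.Injective (pm g hg) := by
    intro g hg c c' h
    obtain ⟨pr, hpr, hL⟩ := htl g hg c
    obtain ⟨pr', hpr', hL'⟩ := htl g hg c'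
    have hLL : (Stmt17Aux.nw d c).toList ++ [pr, ((1 : ℤˣ), g)]
        = (Stmt17Aux.nw d c').toList ++ [pr', ((1 : ℤˣ), g)] := by
      rw [← hL, ← hL', h]
    have hLeq := List.append_inj_left' hLL (by simp)
    have hnweq : Stmt17Aux.nw d c = Stmt17Aux.nw d c' := by
      apply HNNExtension.NormalWord.ext
      · rw [Stmt17Aux.nw_head, Stmt17Aux.nw_head]
      · exact hLeq
    calc c = Quotient.mk _ ((Stmt17Aux.nw d c).prod φ) := (Stmt17Aux.mk_nw_prod d c).symm
      _ = Quotient.mk _ ((Stmt17Aux.nw d c').prod φ) := by rw [hnweq]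
      _ = c' := Stmt17Aux.mk_nw_prod d c'
  -- disjointness of ranges
  have hdisj : ∀ c c', pm 1 (h1Sets 1) c ≠ pm rA hrA c' := by
    intro c c' h
    obtain ⟨pr, hpr, hL⟩ := htl 1 (h1Sets 1) c
    obtain ⟨pr', hpr', hL'⟩ := htl rA hrA c'
    have hLL : (Stmt17Aux.nw d c).toList ++ [pr, ((1 : ℤˣ), (1 : H))]
        = (Stmt17Aux.nw d c').toList ++ [pr', ((1 : ℤˣ), rA)] := by
      rw [← hL, ← hL', h]
    have hs := List.append_inj_right' hLL (by simp)
    injection hs with hpr2 hs2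
    injection hs2 with hq2 _
    exact hrA1 (congrArg Prod.snd hq2).symm
  -- choose words for the four possible right-multipliers
  let sig : ℤˣ × H → H → HNNExtension H A B φ := fun pr g =>
    HNNExtension.t ^ ((pr.1 : ℤ)) * HNNExtension.of pr.2 *
      (HNNExtension.t ^ (((1 : ℤˣ)) : ℤ) * HNNExtension.of g)
  obtain ⟨w1, hw1⟩ := Stmt17Aux.exists_evalWord hsym (sig ((-1 : ℤˣ), rB) 1)
  obtain ⟨w2, hw2⟩ := Stmt17Aux.exists_evalWord hsym (sig ((1 : ℤˣ), (1 : H)) 1)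
  obtain ⟨w3, hw3⟩ := Stmt17Aux.exists_evalWord hsym (sig ((-1 : ℤˣ), rB) rA)
  obtain ⟨w4, hw4⟩ := Stmt17Aux.exists_evalWord hsym (sig ((1 : ℤˣ), (1 : H)) rA)
  let k : ℕ := max (max w1.length w2.length) (max w3.length w4.length)
  -- generic distance bound
  have dist_le : ∀ (y c : Quotient (QuotientGroup.rightRel
        (HNNExtension.of : H →* HNNExtension H A B φ).range))
      (s : HNNExtension H A B φ) (w : List α), evalWord η w = s → w.length ≤ k →
      y = Quotient.mk (QuotientGroup.rightRel
        (HNNExtension.of : H →* HNNExtension H A B φ).range)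
        ((Stmt17Aux.nw d c).prod φ * s) →
      cosetDist (HNNExtension.of : H →* HNNExtension H A B φ).range η c y ≤ k := by
    intro y c s w hw hlen hy
    refine le_trans (Nat.sInf_le ?_) hlen
    exact ⟨w, rfl, (Stmt17Aux.nw d c).prod φ, (Stmt17Aux.mk_nw_prod d c).symm,
      by rw [hw]; exact hy⟩
  have pm_dist : ∀ (g : H) (hg : g ∈ Sets 1) (c : _), (g = 1 ∨ g = rA) →
      cosetDist (HNNExtension.of : H →* HNNExtension H A B φ).range η c (pm g hg c) ≤ k := by
    intro g hg c hgor
    obtain ⟨pr, hpr, hh, hL, hprod⟩ :=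
      Stmt17Aux.appendW_spec (φ := φ) (Stmt17Aux.nw d c) rB g hrB hrBB (h1Sets 1) hg
    have hy : pm g hg c = Quotient.mk (QuotientGroup.rightRel
        (HNNExtension.of : H →* HNNExtension H A B φ).range)
        ((Stmt17Aux.nw d c).prod φ * sig pr g) := by
      show Quotient.mk _ ((Stmt17Aux.appendW (Stmt17Aux.nw d c) rB g hrB hrBB
        (h1Sets 1) hg).prod φ) = _
      rw [hprod]
    rcases hgor with rfl | rfl
    · rcases hpr with rfl | rfl
      · exact dist_le _ c _ w1 hw1 (le_trans (le_max_left _ _) (le_max_left _ _)) hy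
      · exact dist_le _ c _ w2 hw2 (le_trans (le_max_right _ _) (le_max_left _ _)) hy
    · rcases hpr with rfl | rfl
      · exact dist_le _ c _ w3 hw3 (le_trans (le_max_left _ _) (le_max_right _ _)) hy
      · exact dist_le _ c _ w4 hw4 (le_trans (le_max_right _ _) (le_max_right _ _)) hy
  -- the doubling map
  refine ⟨fun y =>
    if ∃ c, pm 1 (h1Sets 1) c = y then Function.invFun (pm 1 (h1Sets 1)) y
    else if ∃ c, pm rA hrA c = y then Function.invFun (pm rA hrA) y
    else y, k, ?_, ?_⟩
  · -- distance bound
    intro y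
    show cosetDist (HNNExtension.of : H →* HNNExtension H A B φ).range η
      (if ∃ c, pm 1 (h1Sets 1) c = y then Function.invFun (pm 1 (h1Sets 1)) y
        else if ∃ c, pm rA hrA c = y then Function.invFun (pm rA hrA) y else y) y ≤ k
    by_cases h1y : ∃ c, pm 1 (h1Sets 1) c = y
    · obtain ⟨c, rfl⟩ := h1y
      rw [if_pos ⟨c, rfl⟩, Function.leftInverse_invFun (hinj 1 (h1Sets 1)) c]
      exact pm_dist 1 (h1Sets 1) c (Or.inl rfl)
    · rw [if_neg h1y]
      by_cases h2y : ∃ c, pm rA hrA c = y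
      · obtain ⟨c, rfl⟩ := h2y
        rw [if_pos ⟨c, rfl⟩, Function.leftInverse_invFun (hinj rA hrA) c]
        exact pm_dist rA hrA c (Or.inr rfl)
      · rw [if_neg h2y]
        refine le_trans (Nat.sInf_le ?_) (Nat.zero_le k)
        refine ⟨[], rfl, y.out, ?_, ?_⟩
        · exact (Quotient.out_eq y).symm
        · have hev : evalWord η ([] : List α) = 1 := by simp [evalWord]
          rw [hev, mul_one]
          exact (Quotient.out_eq y).symm
  · -- fibers have at least two elements
    intro x
    refine ⟨pm 1 (h1Sets 1) x, pm rA hrA x, hdisj x x, ?_, ?_⟩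
    · show (if ∃ c, pm 1 (h1Sets 1) c = pm 1 (h1Sets 1) x then
          Function.invFun (pm 1 (h1Sets 1)) (pm 1 (h1Sets 1) x)
        else if ∃ c, pm rA hrA c = pm 1 (h1Sets 1) x then
          Function.invFun (pm rA hrA) (pm 1 (h1Sets 1) x)
        else pm 1 (h1Sets 1) x) = x
      rw [if_pos ⟨x, rfl⟩]
      exact Function.leftInverse_invFun (hinj 1 (h1Sets 1)) x
    · have h1y : ¬ ∃ c, pm 1 (h1Sets 1) c = pm rA hrA x := by
        rintro ⟨c, hc⟩
        exact hdisj c x hc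
      show (if ∃ c, pm 1 (h1Sets 1) c = pm rA hrA x then
          Function.invFun (pm 1 (h1Sets 1)) (pm rA hrA x)
        else if ∃ c, pm rA hrA c = pm rA hrA x then
          Function.invFun (pm rA hrA) (pm rA hrA x)
        else pm rA hrA x) = x
      rw [if_neg h1y, if_pos ⟨x, rfl⟩]
      exact Function.leftInverse_invFun (hinj rA hrA) x
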